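/- Pathwise domination of the buy-and-hold hedge before cancellation: let J = { i : A_i < ∞ }, let T > 0, and let s : [0,T] → ℝ^d_+ be a continuous path with Σ_{i∈J} s_i(0)/A_i < 1. Then for every t ∈ [0,T] such that F(0) + ⟨B, s(u)⟩ < F(s(u)) + Δ for all u ∈ [0,t), one has F(0) + ⟨B, s(t)⟩ ≥ F(s(t)). -/

import Mathlib

open Set
open scoped Classical

noncomputable section

/-- The nonnegative orthant of `ℝ^d` (with the Euclidean structure). -/
def orthant (d : ℕ) : Set (EuclideanSpace ℝ (Fin d)) := {x | ∀ i, 0 ≤ x i}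

/-- The subdifferential (set of subgradients) of a function `φ : ℝ₊ → ℝ` at a point `t`. -/
def subdiff (φ : ℝ → ℝ) (t : ℝ) : Set ℝ :=
  {v | ∀ s : ℝ, 0 ≤ s → φ t + v * (s - t) ≤ φ s}

/-- `Fi F i t = F (t • e_i)`, the restriction of `F` to the `i`-th coordinate axis. -/
def Fi {d : ℕ} (F : EuclideanSpace ℝ (Fin d) → ℝ) (i : Fin d) (t : ℝ) : ℝ :=
  F (t • EuclideanSpace.single i (1 : ℝ))

/-- The set `{t > 0 : (F_i(t) + Δ - F(0))/t ∈ ∂F_i(t)}` defining `A_i`. -/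
def setA {d : ℕ} (F : EuclideanSpace ℝ (Fin d) → ℝ) (Δ : ℝ) (i : Fin d) : Set ℝ :=
  {t | 0 < t ∧ (Fi F i t + Δ - F 0) / t ∈ subdiff (Fi F i) t}

/-- `A_i` (finite value; `A_i = ∞` corresponds to `setA F Δ i` being empty). -/
def Avar {d : ℕ} (F : EuclideanSpace ℝ (Fin d) → ℝ) (Δ : ℝ) (i : Fin d) : ℝ :=
  sInf (setA F Δ i)

/-- `B_i = (F_i(A_i) + Δ - F(0))/A_i` if `A_i < ∞`, and
`B_i = sup ⋃_{t>0} ∂F_i(t)` otherwise. -/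
def Bvar {d : ℕ} (F : EuclideanSpace ℝ (Fin d) → ℝ) (Δ : ℝ) (i : Fin d) : ℝ :=
  if (setA F Δ i).Nonempty then (Fi F i (Avar F Δ i) + Δ - F 0) / Avar F Δ i
  else sSup (⋃ t ∈ Ioi (0 : ℝ), subdiff (Fi F i) t)

/-- The inner product `⟨B, x⟩`. -/
def Bdot {d : ℕ} (F : EuclideanSpace ℝ (Fin d) → ℝ) (Δ : ℝ)
    (x : EuclideanSpace ℝ (Fin d)) : ℝ :=
  ∑ i, Bvar F Δ i * x i

/-- The set `{t > 0 : F(0) + ⟨B, t·x/‖x‖⟩ ≥ Δ + F(t·x/‖x‖)}` defining `H(x)`. -/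
def setH {d : ℕ} (F : EuclideanSpace ℝ (Fin d) → ℝ) (Δ : ℝ)
    (x : EuclideanSpace ℝ (Fin d)) : Set ℝ :=
  {t | 0 < t ∧ Δ + F ((t / ‖x‖) • x) ≤ F 0 + Bdot F Δ ((t / ‖x‖) • x)}

/-- The game analogue `R` of the concave envelope: `R(0) = F(0)`; for `x ≠ 0`,
`R(x) = F(x) + Δ` if `‖x‖ ≥ H(x)` (i.e. `setH F Δ x` is nonempty with `sInf ≤ ‖x‖`),
and `R(x) = F(0) + ⟨B, x⟩` if `‖x‖ < H(x)`. -/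
def Rfun {d : ℕ} (F : EuclideanSpace ℝ (Fin d) → ℝ) (Δ : ℝ)
    (x : EuclideanSpace ℝ (Fin d)) : ℝ :=
  if x = 0 then F 0
  else if (setH F Δ x).Nonempty ∧ sInf (setH F Δ x) ≤ ‖x‖ then F x + Δ
  else F 0 + Bdot F Δ x

/-- Membership in the class `𝒢`: `f : ℝ^d₊ → ℝ₊` continuous, `F ≤ f ≤ F + Δ`, and `f`
is concave on every convex subset `D` of the orthant on which `f < F + Δ`. -/
def memG {d : ℕ} (F : EuclideanSpace ℝ (Fin d) → ℝ) (Δ : ℝ)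
    (f : EuclideanSpace ℝ (Fin d) → ℝ) : Prop :=
  ContinuousOn f (orthant d) ∧
  (∀ x ∈ orthant d, 0 ≤ f x) ∧
  (∀ x ∈ orthant d, F x ≤ f x ∧ f x ≤ F x + Δ) ∧
  (∀ D : Set (EuclideanSpace ℝ (Fin d)), D ⊆ orthant d → Convex ℝ D →
    (∀ x ∈ D, f x < F x + Δ) → ConcaveOn ℝ D f)


section Helpers

variable {d : ℕ} (F : EuclideanSpace ℝ (Fin d) → ℝ) (Δ : ℝ)

lemma smul_single_mem_orthant (i : Fin d) {t : ℝ} (ht : 0 ≤ t) :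
    t • EuclideanSpace.single i (1 : ℝ) ∈ orthant d := by
  intro j
  have : (t • EuclideanSpace.single i (1 : ℝ)) j = t * (EuclideanSpace.single i (1:ℝ) j) := rfl
  rw [this, EuclideanSpace.single_apply]
  by_cases h : j = i <;> simp [h, ht]

lemma dist_smul_single (i : Fin d) (a b : ℝ) :
    dist (a • EuclideanSpace.single i (1 : ℝ)) (b • EuclideanSpace.single i (1 : ℝ)) = dist a b := by
  rw [dist_eq_norm, dist_eq_norm, ← sub_smul, norm_smul, EuclideanSpace.norm_single,
    norm_one, mul_one, Real.norm_eq_abs]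

variable {L : NNReal}

lemma fi_dist (hFlip : LipschitzOnWith L F (orthant d)) (i : Fin d) {a b : ℝ}
    (ha : 0 ≤ a) (hb : 0 ≤ b) : dist (Fi F i a) (Fi F i b) ≤ L * dist a b := by
  have := hFlip.dist_le_mul _ (smul_single_mem_orthant i ha) _ (smul_single_mem_orthant i hb)
  rwa [dist_smul_single] at this

lemma fi_convex (hFconv : ConvexOn ℝ (orthant d) F) (i : Fin d) :
    ConvexOn ℝ (Ici (0:ℝ)) (Fi F i) := by
  refine ⟨convex_Ici 0, fun a ha b hb lam mu hlam hmu hs => ?_⟩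
  have key := hFconv.2 (smul_single_mem_orthant i ha) (smul_single_mem_orthant i hb)
    hlam hmu hs
  simpa [Fi, smul_smul, add_smul, smul_eq_mul] using key

lemma fi_zero (i : Fin d) : Fi F i 0 = F 0 := by simp [Fi]

lemma subdiff_le_L (hFlip : LipschitzOnWith L F (orthant d)) (i : Fin d) {t v : ℝ}
    (ht : 0 < t) (hv : v ∈ subdiff (Fi F i) t) : v ≤ L := by
  have h1 := hv (t + 1) (by linarith)
  have h2 : dist (Fi F i (t+1)) (Fi F i t) ≤ L * dist (t+1) t :=
    fi_dist F hFlip i (by linarith) ht.le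
  rw [Real.dist_eq, Real.dist_eq] at h2
  have hd : |(t+1) - t| = 1 := by norm_num
  rw [hd, mul_one] at h2
  have := abs_le.mp (abs_abs_sub_abs_le_abs_sub (Fi F i (t+1)) (Fi F i t)) -- dummy; replaced below
  have h3 : Fi F i (t+1) - Fi F i t ≤ L := le_trans (le_abs_self _) h2
  linarith [h1, h3]

lemma setA_bound (hFlip : LipschitzOnWith L F (orthant d)) (i : Fin d) {t : ℝ}
    (ht : t ∈ setA F Δ i) : Δ ≤ 2 * L * t := by
  obtain ⟨htpos, hsub⟩ := ht
  have h1 := hsub (2 * t) (by linarith)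
  have hmul : (Fi F i t + Δ - F 0) / t * (2 * t - t) = Fi F i t + Δ - F 0 := by
    have : 2 * t - t = t := by ring
    rw [this, div_mul_cancel₀ _ (ne_of_gt htpos)]
  rw [hmul] at h1
  have h2 : dist (Fi F i (2*t)) (Fi F i t) ≤ L * dist (2*t) t :=
    fi_dist F hFlip i (by linarith) htpos.le
  have h3 : dist (Fi F i 0) (Fi F i t) ≤ L * dist 0 t :=
    fi_dist F hFlip i le_rfl htpos.le
  rw [Real.dist_eq, Real.dist_eq] at h2 h3
  have e2 : |2*t - t| = t := by rw [abs_of_nonneg (by linarith)]; ring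
  have e3 : |(0:ℝ) - t| = t := by rw [abs_sub_comm, sub_zero, abs_of_nonneg htpos.le]
  rw [e2] at h2; rw [e3] at h3
  have h2' : Fi F i (2*t) - Fi F i t ≤ L * t := le_trans (le_abs_self _) h2
  have h3' : Fi F i 0 - Fi F i t ≤ L * t := le_trans (le_abs_self _) h3
  rw [fi_zero] at h3'
  nlinarith

lemma Avar_pos (hΔ : 0 < Δ) (hFlip : LipschitzOnWith L F (orthant d)) (i : Fin d)
    (hne : (setA F Δ i).Nonempty) : 0 < Avar F Δ i := by
  obtain ⟨t₀, ht₀⟩ := hne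
  have hL : (0:ℝ) < L := by
    by_contra h
    push_neg at h
    have := setA_bound F Δ hFlip i ht₀
    have ht₀pos := ht₀.1
    nlinarith
  have hlb : ∀ t ∈ setA F Δ i, Δ / (2 * L) ≤ t := by
    intro t ht
    have := setA_bound F Δ hFlip i ht
    rw [div_le_iff₀ (by positivity)]
    linarith [this]
  have : Δ / (2 * L) ≤ Avar F Δ i := le_csInf ⟨t₀, ht₀⟩ hlb
  have : (0:ℝ) < Δ / (2 * L) := by positivity
  linarith [le_csInf (⟨t₀, ht₀⟩ : (setA F Δ i).Nonempty) hlb]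

lemma subdiff_nonempty (hFconv : ConvexOn ℝ (orthant d) F) (i : Fin d) {t : ℝ}
    (ht : 0 < t) : (subdiff (Fi F i) t).Nonempty := by
  classical
  set φ := Fi F i with hφ
  have hconv := fi_convex F hFconv i
  set S : Set ℝ := (fun s => (φ s - φ t) / (s - t)) '' Ioi t with hS
  have hSne : S.Nonempty := ⟨_, ⟨t + 1, by simp [mem_Ioi], rfl⟩⟩
  have hlb : ∀ u ∈ S, (φ t - φ 0) / t ≤ u := by
    rintro u ⟨s, hs, rfl⟩
    have := hconv.slope_mono_adjacent (le_refl (0:ℝ)) (le_of_lt (lt_trans ht hs)) ht hs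
    simpa using this
  have hbdd : BddBelow S := ⟨_, hlb⟩
  refine ⟨sInf S, ?_⟩
  intro s hs
  rcases lt_trichotomy s t with hlt | heq | hgt
  · have hcl : ∀ u ∈ S, (φ t - φ s) / (t - s) ≤ u := by
      rintro u ⟨r, hr, rfl⟩
      exact hconv.slope_mono_adjacent hs (le_of_lt (lt_trans ht hr)) hlt hr
    have hv : (φ t - φ s) / (t - s) ≤ sInf S := le_csInf hSne hcl
    have hts : (0:ℝ) < t - s := by linarith
    have := (div_le_iff₀ hts).mp hv
    nlinarith
  · subst heq; simp
  · have hmem : (φ s - φ t) / (s - t) ∈ S := ⟨s, hgt, rfl⟩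
    have hv : sInf S ≤ (φ s - φ t) / (s - t) := csInf_le hbdd hmem
    have hst : (0:ℝ) < s - t := by linarith
    have h1 : (φ s - φ t) / (s - t) * (s - t) = φ s - φ t := by field_simp
    nlinarith [mul_le_mul_of_nonneg_right hv hst.le]

lemma fi_le_notJ (hFconv : ConvexOn ℝ (orthant d) F)
    (hFlip : LipschitzOnWith L F (orthant d)) (i : Fin d)
    (hne : ¬ (setA F Δ i).Nonempty) {M : ℝ} (hM : 0 ≤ M) :
    Fi F i M ≤ F 0 + Bvar F Δ i * M := by
  rcases eq_or_lt_of_le hM with hM0 | hMpos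
  · rw [← hM0, mul_zero, add_zero, fi_zero]
  have hB : Bvar F Δ i = sSup (⋃ t ∈ Ioi (0:ℝ), subdiff (Fi F i) t) := if_neg hne
  obtain ⟨v, hv⟩ := subdiff_nonempty F hFconv i hMpos
  have hvU : v ∈ ⋃ t ∈ Ioi (0:ℝ), subdiff (Fi F i) t := by
    exact mem_iUnion₂.mpr ⟨M, hMpos, hv⟩
  have hbdd : BddAbove (⋃ t ∈ Ioi (0:ℝ), subdiff (Fi F i) t) := by
    refine ⟨L, ?_⟩
    rintro u hu
    obtain ⟨t, htpos, hut⟩ := mem_iUnion₂.mp hu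
    exact subdiff_le_L F hFlip i htpos hut
  have hvB : v ≤ Bvar F Δ i := hB ▸ le_csSup hbdd hvU
  have h0 := hv 0 le_rfl
  rw [fi_zero] at h0
  nlinarith

lemma sum_single_eq (θ : ℝ) (x : EuclideanSpace ℝ (Fin d)) :
    ∑ i, (θ * x i) • EuclideanSpace.single i (1:ℝ) = θ • x := by
  ext j
  have h1 : (∑ i, (θ * x i) • EuclideanSpace.single i (1:ℝ)) j
      = ∑ i, ((θ * x i) • EuclideanSpace.single i (1:ℝ)) j := by
    rw [WithLp.ofLp_sum, Finset.sum_apply]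
  rw [h1]
  have h2 : ∀ i, ((θ * x i) • EuclideanSpace.single i (1:ℝ)) j
      = (θ * x i) * (EuclideanSpace.single i (1:ℝ) j) := fun i => rfl
  simp only [h2, EuclideanSpace.single_apply]
  rw [Finset.sum_eq_single j]
  · simp
  · intro b _ hb; simp [Ne.symm hb]
  · intro h; exact absurd (Finset.mem_univ j) h

lemma key_bound (hΔ : 0 < Δ) (hFconv : ConvexOn ℝ (orthant d) F)
    (hFlip : LipschitzOnWith L F (orthant d))
    (x : EuclideanSpace ℝ (Fin d)) (hx : x ∈ orthant d)
    (hg : ∑ i ∈ Finset.univ.filter (fun i => (setA F Δ i).Nonempty), x i / Avar F Δ i ≤ 1) :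
    F x ≤ F 0 + Bdot F Δ x
      - Δ * ∑ i ∈ Finset.univ.filter (fun i => (setA F Δ i).Nonempty), x i / Avar F Δ i := by
  classical
  set g := ∑ i ∈ Finset.univ.filter (fun i => (setA F Δ i).Nonempty), x i / Avar F Δ i with hgdef
  have core : ∀ θ : ℝ, 0 < θ → θ < 1 →
      F (θ • x) ≤ F 0 + θ * Bdot F Δ x - θ * (Δ * g) := by
    intro θ hθ0 hθ1
    set S' := ∑ i ∈ Finset.univ.filter (fun i => ¬ (setA F Δ i).Nonempty), x i with hS'
    have hS'nn : 0 ≤ S' := Finset.sum_nonneg (fun i _ => hx i)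
    set M := (S' + 1) / (1 - θ) with hMdef
    have hMpos : 0 < M := div_pos (by linarith) (by linarith)
    set q : Fin d → ℝ := fun i => if (setA F Δ i).Nonempty then Avar F Δ i else M with hqdef
    have hqpos : ∀ i, 0 < q i := by
      intro i
      by_cases h : (setA F Δ i).Nonempty
      · simpa [hqdef, h] using Avar_pos F Δ hΔ hFlip i h
      · simpa [hqdef, h] using hMpos
    have hwnn : ∀ i, 0 ≤ θ * x i / q i :=
      fun i => div_nonneg (mul_nonneg hθ0.le (hx i)) (hqpos i).le
    have hsum_split : ∑ i, θ * x i / q i = θ * g + θ * (S' / M) := by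
      rw [← Finset.sum_filter_add_sum_filter_not Finset.univ
        (fun i => (setA F Δ i).Nonempty) (fun i => θ * x i / q i)]
      congr 1
      · rw [hgdef, Finset.mul_sum]
        refine Finset.sum_congr rfl (fun i hi => ?_)
        rw [Finset.mem_filter] at hi
        rw [hqdef]; simp only [if_pos hi.2]; rw [mul_div_assoc]
      · rw [hS', Finset.sum_div, Finset.mul_sum]
        refine Finset.sum_congr rfl (fun i hi => ?_)
        rw [Finset.mem_filter] at hi
        rw [hqdef]; simp only [if_neg hi.2]; rw [mul_div_assoc]
    have hSM : S' / M ≤ 1 - θ := by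
      rw [hMdef, div_div_eq_mul_div]
      rw [div_le_iff₀ (by linarith)]
      nlinarith
    have hSMnn : 0 ≤ S' / M := div_nonneg hS'nn hMpos.le
    have hsum_le : ∑ i, θ * x i / q i ≤ 1 := by
      rw [hsum_split]
      nlinarith
    set w : Option (Fin d) → ℝ :=
      fun o => o.elim (1 - ∑ i, θ * x i / q i) (fun i => θ * x i / q i) with hwdef
    set p : Option (Fin d) → EuclideanSpace ℝ (Fin d) :=
      fun o => o.elim 0 (fun i => q i • EuclideanSpace.single i (1:ℝ)) with hpdef
    have hw0 : ∀ o ∈ Finset.univ, 0 ≤ w o := by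
      rintro (_ | i) _
      · simpa [hwdef] using by linarith [hsum_le]
      · exact hwnn i
    have hw1 : ∑ o : Option (Fin d), w o = 1 := by
      rw [Fintype.sum_option]
      simp [hwdef]
    have hmem : ∀ o ∈ Finset.univ, p o ∈ orthant d := by
      rintro (_ | i) _
      · intro j; simp [hpdef]
      · exact smul_single_mem_orthant i (hqpos i).le
    have hsum_eq : ∑ o : Option (Fin d), w o • p o = θ • x := by
      rw [Fintype.sum_option]
      have hnone : w none • p none = 0 := by simp [hwdef, hpdef]
      rw [hnone, zero_add]
      have hterm : ∀ i : Fin d, w (some i) • p (some i)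
          = (θ * x i) • EuclideanSpace.single i (1:ℝ) := by
        intro i
        show (θ * x i / q i) • (q i • EuclideanSpace.single i (1:ℝ)) = _
        rw [smul_smul, div_mul_cancel₀ _ (ne_of_gt (hqpos i))]
      simp only [hterm]
      exact sum_single_eq θ x
    have hcomb := hFconv.map_sum_le hw0 hw1 hmem
    rw [hsum_eq] at hcomb
    have hstep : ∀ i : Fin d, (θ * x i / q i) * F (q i • EuclideanSpace.single i (1:ℝ))
        ≤ θ * (Bvar F Δ i * x i) + F 0 * (θ * x i / q i)
          - (if (setA F Δ i).Nonempty then Δ * (θ * (x i / Avar F Δ i)) else 0) := by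
      intro i
      by_cases h : (setA F Δ i).Nonempty
      · have hA : 0 < Avar F Δ i := Avar_pos F Δ hΔ hFlip i h
        have hqA : q i = Avar F Δ i := if_pos h
        have hBA : Bvar F Δ i * Avar F Δ i = Fi F i (Avar F Δ i) + Δ - F 0 := by
          rw [Bvar, if_pos h, div_mul_cancel₀ _ (ne_of_gt hA)]
        have hFeq : F (Avar F Δ i • EuclideanSpace.single i (1:ℝ))
            = F 0 - Δ + Bvar F Δ i * Avar F Δ i := by
          have : Fi F i (Avar F Δ i) = F 0 - Δ + Bvar F Δ i * Avar F Δ i := by linarith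
          exact this
        rw [hqA, if_pos h, hFeq]
        apply le_of_eq
        field_simp
        ring
      · have hqM : q i = M := if_neg h
        have hFM : F (M • EuclideanSpace.single i (1:ℝ)) ≤ F 0 + Bvar F Δ i * M :=
          fi_le_notJ F Δ hFconv hFlip i h hMpos.le
        have hnn : 0 ≤ θ * x i / M := by
          rw [← hqM]; exact hwnn i
        rw [hqM, if_neg h, sub_zero]
        calc (θ * x i / M) * F (M • EuclideanSpace.single i (1:ℝ))
            ≤ (θ * x i / M) * (F 0 + Bvar F Δ i * M) :=
              mul_le_mul_of_nonneg_left hFM hnn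
          _ = θ * (Bvar F Δ i * x i) + F 0 * (θ * x i / M) := by
              field_simp
              ring
    have hrhs : ∑ o : Option (Fin d), w o • F (p o)
        ≤ F 0 + θ * Bdot F Δ x - θ * (Δ * g) := by
      rw [Fintype.sum_option]
      have hnone : w none • F (p none) = (1 - ∑ i, θ * x i / q i) * F 0 := by
        simp only [hwdef, hpdef]
        rfl
      have hsum2 : ∑ i : Fin d, w (some i) • F (p (some i))
          ≤ θ * Bdot F Δ x + F 0 * (∑ i, θ * x i / q i) - θ * (Δ * g) := by
        have hsb : ∑ i : Fin d, w (some i) • F (p (some i))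
            ≤ ∑ i : Fin d, (θ * (Bvar F Δ i * x i) + F 0 * (θ * x i / q i)
              - (if (setA F Δ i).Nonempty then Δ * (θ * (x i / Avar F Δ i)) else 0)) :=
          Finset.sum_le_sum (fun i _ => hstep i)
        have e1 : ∑ i : Fin d, θ * (Bvar F Δ i * x i) = θ * Bdot F Δ x := by
          rw [Bdot, Finset.mul_sum]
        have e2 : ∑ i : Fin d, F 0 * (θ * x i / q i) = F 0 * (∑ i, θ * x i / q i) := by
          rw [Finset.mul_sum]
        have e3 : ∑ i : Fin d, (if (setA F Δ i).Nonempty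
              then Δ * (θ * (x i / Avar F Δ i)) else 0) = θ * (Δ * g) := by
          rw [← Finset.sum_filter, hgdef, Finset.mul_sum, Finset.mul_sum]
          refine Finset.sum_congr rfl (fun i hi => ?_)
          ring
        rw [Finset.sum_sub_distrib, Finset.sum_add_distrib, e1, e2, e3] at hsb
        exact hsb
      rw [hnone]
      have hfin : (1 - ∑ i, θ * x i / q i) * F 0
          + (θ * Bdot F Δ x + F 0 * (∑ i, θ * x i / q i) - θ * (Δ * g))
          = F 0 + θ * Bdot F Δ x - θ * (Δ * g) := by ring
      linarith [hsum2]
    exact le_trans hcomb hrhs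
  -- Now take θ → 1 using Lipschitz continuity
  have hgnn : 0 ≤ g := by
    apply Finset.sum_nonneg
    intro i hi
    rw [Finset.mem_filter] at hi
    exact div_nonneg (hx i) (Avar_pos F Δ hΔ hFlip i hi.2).le
  have hFx : ∀ θ : ℝ, 0 < θ → θ < 1 →
      F x ≤ F 0 + Bdot F Δ x - Δ * g + (1 - θ) * (Δ * g - Bdot F Δ x + ↑L * ‖x‖) := by
    intro θ h0 h1
    have hxθ : θ • x ∈ orthant d := fun j => mul_nonneg h0.le (hx j)
    have hd := hFlip.dist_le_mul x hx (θ • x) hxθ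
    have hnorm : dist x (θ • x) = (1 - θ) * ‖x‖ := by
      rw [dist_eq_norm]
      have hxx : x - θ • x = (1 - θ) • x := by rw [sub_smul, one_smul]
      rw [hxx, norm_smul, Real.norm_eq_abs, abs_of_nonneg (by linarith)]
    rw [hnorm, Real.dist_eq] at hd
    have hle : F x - F (θ • x) ≤ ↑L * ((1 - θ) * ‖x‖) := le_trans (le_abs_self _) hd
    have hc := core θ h0 h1
    nlinarith
  refine le_of_forall_pos_le_add ?_
  intro ε hε
  set C := |Δ * g - Bdot F Δ x + ↑L * ‖x‖| + 1 with hC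
  have hCpos : 0 < C := by positivity
  set θ := max (1/2 : ℝ) (1 - ε / C) with hθdef
  have h0 : 0 < θ := lt_of_lt_of_le (by norm_num) (le_max_left _ _)
  have h1 : θ < 1 := by
    apply max_lt (by norm_num)
    have : 0 < ε / C := div_pos hε hCpos
    linarith
  have h2 : 1 - θ ≤ ε / C := by
    have := le_max_right (1/2 : ℝ) (1 - ε / C)
    linarith
  have h3 : 0 ≤ 1 - θ := by linarith
  have h4 := hFx θ h0 h1
  have habs : Δ * g - Bdot F Δ x + ↑L * ‖x‖ ≤ C := by
    rw [hC]
    linarith [le_abs_self (Δ * g - Bdot F Δ x + ↑L * ‖x‖)]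
  have h5 : (1 - θ) * (Δ * g - Bdot F Δ x + ↑L * ‖x‖) ≤ ε :=
    calc (1 - θ) * (Δ * g - Bdot F Δ x + ↑L * ‖x‖) ≤ (1 - θ) * C :=
          mul_le_mul_of_nonneg_left habs h3
      _ ≤ (ε / C) * C := mul_le_mul_of_nonneg_right h2 hCpos.le
      _ = ε := div_mul_cancel₀ _ (ne_of_gt hCpos)
  linarith

end Helpers

/-- Pathwise domination of the buy-and-hold hedge before cancellation: if `s` is a
continuous path in the nonnegative orthant with `Σ_{i ∈ J} s_i(0)/A_i < 1`
(where `J = {i : A_i < ∞}`), then for every `t ∈ [0, T]` such that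
`F(0) + ⟨B, s(u)⟩ < F(s(u)) + Δ` for all `u ∈ [0, t)`, one has
`F(0) + ⟨B, s(t)⟩ ≥ F(s(t))`. -/
theorem buy_and_hold_dominates {d : ℕ} (hd : 0 < d) (Δ : ℝ) (hΔ : 0 < Δ)
    (F : EuclideanSpace ℝ (Fin d) → ℝ)
    (hF0 : ∀ x ∈ orthant d, 0 ≤ F x)
    (hFconv : ConvexOn ℝ (orthant d) F)
    (L : NNReal) (hFlip : LipschitzOnWith L F (orthant d))
    (T : ℝ) (hT : 0 < T) (s : ℝ → EuclideanSpace ℝ (Fin d))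
    (hscont : ContinuousOn s (Icc 0 T))
    (hsval : ∀ t ∈ Icc (0 : ℝ) T, s t ∈ orthant d)
    (h0 : ∑ i ∈ Finset.univ.filter (fun i => (setA F Δ i).Nonempty),
      s 0 i / Avar F Δ i < 1)
    (t : ℝ) (ht : t ∈ Icc (0 : ℝ) T)
    (hpre : ∀ u ∈ Ico (0 : ℝ) t, F 0 + Bdot F Δ (s u) < F (s u) + Δ) :
    F (s t) ≤ F 0 + Bdot F Δ (s t) := by
  classical
  set J := Finset.univ.filter (fun i => (setA F Δ i).Nonempty) with hJ
  set G : ℝ → ℝ := fun u => ∑ i ∈ J, s u i / Avar F Δ i with hGdef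
  have hGcont : ContinuousOn G (Icc 0 t) := by
    have hc : Continuous (fun y : EuclideanSpace ℝ (Fin d) => ∑ i ∈ J, y i / Avar F Δ i) := by
      apply continuous_finset_sum
      intro i _
      have hpi : Continuous (fun y : EuclideanSpace ℝ (Fin d) => y i) :=
        (EuclideanSpace.proj i).continuous
      exact hpi.div_const _
    exact hc.comp_continuousOn (hscont.mono (Icc_subset_Icc le_rfl ht.2))
  have hGle : G t ≤ 1 := by
    by_contra hgt
    push_neg at hgt
    have hsub : Icc (G 0) (G t) ⊆ G '' (Icc 0 t) := intermediate_value_Icc ht.1 hGcont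
    have h1mem : (1:ℝ) ∈ Icc (G 0) (G t) := ⟨le_of_lt h0, le_of_lt hgt⟩
    obtain ⟨u, hu, hGu⟩ := hsub h1mem
    have hut : u ≠ t := by
      intro he
      rw [he] at hGu
      rw [hGu] at hgt
      exact lt_irrefl _ hgt
    have huT : u ∈ Icc (0:ℝ) T := ⟨hu.1, le_trans hu.2 ht.2⟩
    have hb : F (s u) ≤ F 0 + Bdot F Δ (s u) - Δ * G u :=
      key_bound F Δ hΔ hFconv hFlip (s u) (hsval u huT) (le_of_eq hGu)
    rw [hGu] at hb
    have hp := hpre u ⟨hu.1, lt_of_le_of_ne hu.2 hut⟩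
    linarith
  have hb : F (s t) ≤ F 0 + Bdot F Δ (s t) - Δ * G t :=
    key_bound F Δ hΔ hFconv hFlip (s t) (hsval t ht) hGle
  have hGnn : 0 ≤ G t := by
    apply Finset.sum_nonneg
    intro i hi
    rw [hJ, Finset.mem_filter] at hi
    exact div_nonneg (hsval t ht i) (Avar_pos F Δ hΔ hFlip i hi.2).le
  nlinarith

end
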